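/- arXiv:1409.4523 — 3 statements merged into one kernel-verified Lean document; each statement's English description precedes it below -/
import Mathlib

section
/- Let p(t,x,y) = (2πt)^{-1/2} (exp(-(x-y)²/(2t)) - exp(-(x+y)²/(2t))) be the Dirichlet heat kernel on the half-line. Then there exists a constant C > 0 such that for all t > 0 and x, y ≥ 0, |∂p/∂x(t,x,y)| ≤ C t^{-1} exp(-(x-y)²/(4t)). -/
open MeasureTheory Real

/-- Dirichlet heat kernel of `∂/∂t - (1/2)Δ` on the half-line `D = [0,∞)`. -/
noncomputable def heatp (t x y : ℝ) : ℝ :=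
  (Real.sqrt (2 * Real.pi * t))⁻¹ *
    (Real.exp (-(x - y) ^ 2 / (2 * t)) - Real.exp (-(x + y) ^ 2 / (2 * t)))

lemma exp_quad_hasDerivAt (t y x : ℝ) (ht : t ≠ 0) :
    HasDerivAt (fun x' => Real.exp (-(x' - y) ^ 2 / (2 * t)))
      (Real.exp (-(x - y) ^ 2 / (2 * t)) * (-(x - y) / t)) x := by
  have h1 : HasDerivAt (fun x' => -(x' - y) ^ 2 / (2 * t)) (-(x - y) / t) x := by
    have h := (((hasDerivAt_id x).sub_const y).pow 2).neg.div_const (2 * t)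
    refine h.congr_deriv ?_
    simp only [id]
    field_simp
    ring
  exact h1.exp

lemma key_bound (t u : ℝ) (ht : 0 < t) :
    |u| * Real.exp (-u ^ 2 / (4 * t)) ≤ Real.sqrt t := by
  have hs : 0 < Real.sqrt t := Real.sqrt_pos.2 ht
  have hst : Real.sqrt t ^ 2 = t := Real.sq_sqrt ht.le
  have hpos : 0 < 1 + u ^ 2 / (4 * t) := by positivity
  have h1 : Real.exp (-u ^ 2 / (4 * t)) ≤ (1 + u ^ 2 / (4 * t))⁻¹ := by
    rw [show -u ^ 2 / (4 * t) = -(u ^ 2 / (4 * t)) by ring, Real.exp_neg]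
    apply inv_anti₀ hpos
    have := Real.add_one_le_exp (u ^ 2 / (4 * t))
    linarith
  have h2 : |u| * (1 + u ^ 2 / (4 * t))⁻¹ ≤ Real.sqrt t := by
    rw [mul_inv_le_iff₀ hpos]
    have heq : (1 + u ^ 2 / (4 * t)) * Real.sqrt t * (4 * Real.sqrt t) = 4 * t + u ^ 2 := by
      field_simp
      nlinarith [hst]
    nlinarith [heq, sq_nonneg (|u| - 2 * Real.sqrt t), sq_abs u, hs]
  calc |u| * Real.exp (-u ^ 2 / (4 * t)) ≤ |u| * (1 + u ^ 2 / (4 * t))⁻¹ :=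
        mul_le_mul_of_nonneg_left h1 (abs_nonneg u)
    _ ≤ Real.sqrt t := h2

theorem heatp_deriv_x_bound :
    ∃ C > (0 : ℝ), ∀ t > (0 : ℝ), ∀ x y : ℝ, 0 ≤ x → 0 ≤ y →
      |deriv (fun x' => heatp t x' y) x| ≤ C * t⁻¹ * Real.exp (-(x - y) ^ 2 / (4 * t)) := by
  refine ⟨1, one_pos, fun t ht x y hx hy => ?_⟩
  have htne : t ≠ 0 := ht.ne'
  set c := (Real.sqrt (2 * Real.pi * t))⁻¹ with hc
  have hd1 := exp_quad_hasDerivAt t y x htne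
  have hd2 : HasDerivAt (fun x' => Real.exp (-(x' + y) ^ 2 / (2 * t)))
      (Real.exp (-(x + y) ^ 2 / (2 * t)) * (-(x + y) / t)) x := by
    have h := exp_quad_hasDerivAt t (-y) x htne
    simpa only [sub_neg_eq_add] using h
  have hD : HasDerivAt (fun x' => heatp t x' y)
      (c * (Real.exp (-(x - y) ^ 2 / (2 * t)) * (-(x - y) / t) -
            Real.exp (-(x + y) ^ 2 / (2 * t)) * (-(x + y) / t))) x := by
    exact ((hd1.sub hd2).const_mul c)
  rw [hD.deriv]
  set F1 := Real.exp (-(x - y) ^ 2 / (4 * t)) with hF1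
  set F2 := Real.exp (-(x + y) ^ 2 / (4 * t)) with hF2
  have hE1 : Real.exp (-(x - y) ^ 2 / (2 * t)) = F1 * F1 := by
    rw [hF1, ← Real.exp_add]; congr 1; field_simp; ring
  have hE2 : Real.exp (-(x + y) ^ 2 / (2 * t)) = F2 * F2 := by
    rw [hF2, ← Real.exp_add]; congr 1; field_simp; ring
  have hF1pos : 0 < F1 := Real.exp_pos _
  have hF2pos : 0 < F2 := Real.exp_pos _
  have hF21 : F2 ≤ F1 := by
    apply Real.exp_le_exp.2
    have h4 : (x - y) ^ 2 ≤ (x + y) ^ 2 := by nlinarith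
    rw [div_le_div_iff₀ (by positivity) (by positivity)]
    nlinarith
  have hk1 : |x - y| * F1 ≤ Real.sqrt t := key_bound t (x - y) ht
  have hk2 : (x + y) * F2 ≤ Real.sqrt t := by
    have := key_bound t (x + y) ht
    rwa [abs_of_nonneg (by linarith)] at this
  have hcpos : 0 < c := by
    rw [hc]
    apply inv_pos.2
    apply Real.sqrt_pos.2
    positivity
  -- bound |deriv|
  have habs : |c * (Real.exp (-(x - y) ^ 2 / (2 * t)) * (-(x - y) / t) -
            Real.exp (-(x + y) ^ 2 / (2 * t)) * (-(x + y) / t))|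
      ≤ c * (|x - y| * F1 * F1 / t + (x + y) * F2 * F2 / t) := by
    rw [abs_mul, abs_of_pos hcpos, hE1, hE2]
    apply mul_le_mul_of_nonneg_left _ hcpos.le
    have e1 : |F1 * F1 * (-(x - y) / t)| = |x - y| * F1 * F1 / t := by
      rw [abs_mul, abs_of_pos (mul_pos hF1pos hF1pos), abs_div, abs_neg, abs_of_pos ht]
      ring
    have e2 : |F2 * F2 * (-(x + y) / t)| = (x + y) * F2 * F2 / t := by
      rw [abs_mul, abs_of_pos (mul_pos hF2pos hF2pos), abs_div, abs_neg, abs_of_pos ht,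
        abs_of_nonneg (by linarith : (0:ℝ) ≤ x + y)]
      ring
    calc |F1 * F1 * (-(x - y) / t) - F2 * F2 * (-(x + y) / t)|
        ≤ |F1 * F1 * (-(x - y) / t)| + |F2 * F2 * (-(x + y) / t)| := abs_sub _ _
      _ = |x - y| * F1 * F1 / t + (x + y) * F2 * F2 / t := by rw [e1, e2]
  refine habs.trans ?_
  have hterm1 : |x - y| * F1 * F1 / t ≤ Real.sqrt t * F1 / t := by
    gcongr
  have hterm2 : (x + y) * F2 * F2 / t ≤ Real.sqrt t * F1 / t := by
    have h := calc (x + y) * F2 * F2 ≤ Real.sqrt t * F2 := mul_le_mul_of_nonneg_right hk2 hF2pos.le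
      _ ≤ Real.sqrt t * F1 := mul_le_mul_of_nonneg_left hF21 (Real.sqrt_nonneg t)
    gcongr
  have hsum : c * (|x - y| * F1 * F1 / t + (x + y) * F2 * F2 / t)
      ≤ c * (2 * Real.sqrt t * F1 / t) := by
    apply mul_le_mul_of_nonneg_left _ hcpos.le
    have h := add_le_add hterm1 hterm2
    have heq2 : Real.sqrt t * F1 / t + Real.sqrt t * F1 / t = 2 * Real.sqrt t * F1 / t := by ring
    linarith
  refine hsum.trans ?_
  -- now show c * (2 * √t * F1 / t) ≤ 1 * t⁻¹ * F1
  have hsq : Real.sqrt (2 * Real.pi * t) = Real.sqrt (2 * Real.pi) * Real.sqrt t := by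
    rw [Real.sqrt_mul (by positivity)]
  have hpi4 : (2:ℝ) ≤ Real.sqrt (2 * Real.pi) := by
    have : (4:ℝ) ≤ 2 * Real.pi := by nlinarith [Real.pi_gt_three]
    calc (2:ℝ) = Real.sqrt 4 := by
          rw [show (4:ℝ) = 2 ^ 2 by norm_num, Real.sqrt_sq (by norm_num)]
      _ ≤ Real.sqrt (2 * Real.pi) := Real.sqrt_le_sqrt this
  have hstpos : 0 < Real.sqrt t := Real.sqrt_pos.2 ht
  have hc2 : c * (2 * Real.sqrt t) ≤ 1 := by
    rw [hc, hsq, mul_inv]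
    have h1 : (Real.sqrt (2 * Real.pi))⁻¹ ≤ 2⁻¹ := by
      apply inv_anti₀ (by norm_num) hpi4
    calc (Real.sqrt (2 * Real.pi))⁻¹ * (Real.sqrt t)⁻¹ * (2 * Real.sqrt t)
        = (Real.sqrt (2 * Real.pi))⁻¹ * 2 := by field_simp
      _ ≤ 2⁻¹ * 2 := by nlinarith
      _ = 1 := by norm_num
  calc c * (2 * Real.sqrt t * F1 / t) = (c * (2 * Real.sqrt t)) * (t⁻¹ * F1) := by
        field_simp
    _ ≤ 1 * (t⁻¹ * F1) := by
        apply mul_le_mul_of_nonneg_right hc2 (by positivity)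
    _ = 1 * t⁻¹ * F1 := by ring
end

section
/- Let h₂ ∈ (1/2, 1) and p be the Dirichlet heat kernel on D = [0,∞). Then there is a constant C > 0 such that for all t > 0, x ≥ 0, and θ ∈ ℝ: (∫_D |∫₀¹ ∂p/∂x(t, x + aθ, y) da|^{1/h₂} dy)^{h₂} ≤ C t^{(h₂−2)/2}. -/
open MeasureTheory Real

set_option maxHeartbeats 1000000

noncomputable def dheatp (t z y : ℝ) : ℝ :=
  (Real.sqrt (2 * Real.pi * t))⁻¹ *
    ((y - z) / t * Real.exp (-(z - y) ^ 2 / (2 * t)) +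
      (z + y) / t * Real.exp (-(z + y) ^ 2 / (2 * t)))

lemma heatp_hasDerivAt (t : ℝ) (ht : t ≠ 0) (y z : ℝ) :
    HasDerivAt (fun x' => heatp t x' y) (dheatp t z y) z := by
  have h1 : HasDerivAt (fun x' : ℝ => -(x' - y) ^ 2 / (2 * t))
      (-(2 * (z - y)) / (2 * t)) z := by
    simpa using (((hasDerivAt_id z).sub_const y).pow 2).neg.div_const (2 * t)
  have h2 : HasDerivAt (fun x' : ℝ => -(x' + y) ^ 2 / (2 * t))
      (-(2 * (z + y)) / (2 * t)) z := by
    simpa using (((hasDerivAt_id z).add_const y).pow 2).neg.div_const (2 * t)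
  have := ((h1.exp.sub h2.exp).const_mul (Real.sqrt (2 * Real.pi * t))⁻¹)
  refine this.congr_deriv ?_
  unfold dheatp
  congr 1
  ring

lemma deriv_heatp (t : ℝ) (ht : t ≠ 0) (y z : ℝ) :
    deriv (fun x' => heatp t x' y) z = dheatp t z y :=
  (heatp_hasDerivAt t ht y z).deriv

lemma dheatp_continuous (t y : ℝ) : Continuous fun z => dheatp t z y := by
  unfold dheatp; fun_prop

lemma abs_mul_exp_le {t : ℝ} (ht : 0 < t) (u : ℝ) :
    |u| * Real.exp (-u ^ 2 / (2 * t)) ≤ Real.sqrt t * Real.exp (-u ^ 2 / (4 * t)) := by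
  have hs : 0 < Real.sqrt t := Real.sqrt_pos.mpr ht
  have hsq : Real.sqrt t ^ 2 = t := Real.sq_sqrt ht.le
  have h1 : |u| ≤ Real.sqrt t * Real.exp (u ^ 2 / (4 * t)) := by
    have h2 : u ^ 2 / (4 * t) + 1 ≤ Real.exp (u ^ 2 / (4 * t)) := by
      simpa [add_comm] using Real.add_one_le_exp (u ^ 2 / (4 * t))
    have h3 : |u| ≤ Real.sqrt t * (u ^ 2 / (4 * t) + 1) := by
      have h4 : (0:ℝ) < 4 * t := by linarith
      rw [mul_add, mul_one, ← mul_le_mul_iff_right₀ h4]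
      have e : 4 * t * (Real.sqrt t * (u ^ 2 / (4 * t)) + Real.sqrt t)
          = Real.sqrt t * u ^ 2 + 4 * t * Real.sqrt t := by field_simp
      rw [e]
      nlinarith [mul_nonneg hs.le (sq_nonneg (|u| - 2 * Real.sqrt t)), sq_abs u]
    exact h3.trans (by nlinarith)
  calc |u| * Real.exp (-u ^ 2 / (2 * t))
      ≤ Real.sqrt t * Real.exp (u ^ 2 / (4 * t)) * Real.exp (-u ^ 2 / (2 * t)) := by
        exact mul_le_mul_of_nonneg_right h1 (Real.exp_pos _).le
    _ = Real.sqrt t * Real.exp (-u ^ 2 / (4 * t)) := by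
        rw [mul_assoc, ← Real.exp_add]
        congr 2
        field_simp
        ring


lemma sqrt_two_pi_t_inv_le {t : ℝ} (ht : 0 < t) :
    (Real.sqrt (2 * Real.pi * t))⁻¹ ≤ (Real.sqrt t)⁻¹ := by
  have hs : 0 < Real.sqrt t := Real.sqrt_pos.mpr ht
  apply inv_anti₀ hs
  apply Real.sqrt_le_sqrt
  nlinarith [Real.pi_gt_three]

lemma exp_neg_div_le {a b c d : ℝ} (hc : 0 < c) (hd : 0 < d) (h : b * c ≤ a * d) :
    Real.exp (-a / c) ≤ Real.exp (-b / d) := by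
  apply Real.exp_le_exp.mpr
  rw [div_le_div_iff₀ hc hd]
  nlinarith

/-- Basic bound on |dheatp|. -/
lemma dheatp_abs_le {t : ℝ} (ht : 0 < t) {z y : ℝ} (hz : 0 ≤ z) (hy : 0 ≤ y) :
    |dheatp t z y| ≤ t⁻¹ * (Real.exp (-(z - y) ^ 2 / (4 * t)) + Real.exp (-y ^ 2 / (4 * t))) := by
  have hs : 0 < Real.sqrt t := Real.sqrt_pos.mpr ht
  have hsq : Real.sqrt t * Real.sqrt t = t := Real.mul_self_sqrt ht.le
  have h1 : |(y - z) / t * Real.exp (-(z - y) ^ 2 / (2 * t))|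
      ≤ t⁻¹ * (Real.sqrt t * Real.exp (-(z - y) ^ 2 / (4 * t))) := by
    rw [abs_mul, abs_div, abs_of_pos ht, abs_exp, div_mul_eq_mul_div, div_eq_inv_mul,
      mul_le_mul_iff_right₀ (inv_pos.mpr ht)]
    rw [abs_sub_comm y z]
    exact abs_mul_exp_le ht (z - y)
  have h2 : |(z + y) / t * Real.exp (-(z + y) ^ 2 / (2 * t))|
      ≤ t⁻¹ * (Real.sqrt t * Real.exp (-y ^ 2 / (4 * t))) := by
    rw [abs_mul, abs_div, abs_of_pos ht, abs_exp, div_mul_eq_mul_div, div_eq_inv_mul,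
      mul_le_mul_iff_right₀ (inv_pos.mpr ht)]
    calc |z + y| * Real.exp (-(z + y) ^ 2 / (2 * t))
        ≤ Real.sqrt t * Real.exp (-(z + y) ^ 2 / (4 * t)) := abs_mul_exp_le ht (z + y)
      _ ≤ Real.sqrt t * Real.exp (-y ^ 2 / (4 * t)) := by
          have hyz : y^2 * t ≤ (z+y)^2 * t := mul_le_mul_of_nonneg_right (by nlinarith) ht.le
          have := exp_neg_div_le (a := (z+y)^2) (b := y^2) (c := 4*t) (d := 4*t)
            (by positivity) (by positivity) (by nlinarith)
          exact mul_le_mul_of_nonneg_left this hs.le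
  calc |dheatp t z y|
      ≤ (Real.sqrt t)⁻¹ * (|(y - z) / t * Real.exp (-(z - y) ^ 2 / (2 * t))|
          + |(z + y) / t * Real.exp (-(z + y) ^ 2 / (2 * t))|) := by
        rw [dheatp, abs_mul, abs_of_nonneg (a := (Real.sqrt (2 * Real.pi * t))⁻¹) (by positivity)]
        exact mul_le_mul (sqrt_two_pi_t_inv_le ht) (abs_add_le _ _) (abs_nonneg _) (by positivity)
    _ ≤ (Real.sqrt t)⁻¹ * (t⁻¹ * (Real.sqrt t * Real.exp (-(z - y) ^ 2 / (4 * t)))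
          + t⁻¹ * (Real.sqrt t * Real.exp (-y ^ 2 / (4 * t)))) := by
        exact mul_le_mul_of_nonneg_left (add_le_add h1 h2) (by positivity)
    _ = t⁻¹ * (Real.exp (-(z - y) ^ 2 / (4 * t)) + Real.exp (-y ^ 2 / (4 * t))) := by
        field_simp

/-- Basic bound on |heatp|. -/
lemma heatp_abs_le {t : ℝ} (ht : 0 < t) {z y : ℝ} (hz : 0 ≤ z) (hy : 0 ≤ y) :
    |heatp t z y| ≤ (Real.sqrt t)⁻¹ *
      (Real.exp (-(z - y) ^ 2 / (8 * t)) + Real.exp (-y ^ 2 / (8 * t))) := by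
  have hs : 0 < Real.sqrt t := Real.sqrt_pos.mpr ht
  calc |heatp t z y|
      ≤ (Real.sqrt t)⁻¹ * |Real.exp (-(z - y) ^ 2 / (2 * t)) - Real.exp (-(z + y) ^ 2 / (2 * t))| := by
        rw [heatp, abs_mul, abs_of_nonneg (a := (Real.sqrt (2 * Real.pi * t))⁻¹) (by positivity)]
        exact mul_le_mul_of_nonneg_right (sqrt_two_pi_t_inv_le ht) (abs_nonneg _)
    _ ≤ (Real.sqrt t)⁻¹ * (Real.exp (-(z - y) ^ 2 / (8 * t)) + Real.exp (-y ^ 2 / (8 * t))) := by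
        apply mul_le_mul_of_nonneg_left _ (by positivity)
        refine (abs_sub _ _).trans (add_le_add ?_ ?_)
        · rw [abs_exp]
          exact exp_neg_div_le (by positivity) (by positivity)
            (by nlinarith [mul_le_mul_of_nonneg_right (sq_nonneg (z - y)) ht.le])
        · rw [abs_exp]
          have hyz : y^2 * t ≤ (z+y)^2 * t := mul_le_mul_of_nonneg_right (by nlinarith) ht.le
          exact exp_neg_div_le (by positivity) (by positivity) (by nlinarith)

lemma exp_quarter_le_two : Real.exp (1/4) ≤ 2 := by
  have h1 : Real.exp (1/4) ^ 4 = Real.exp 1 := by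
    rw [← Real.exp_nat_mul]; norm_num
  by_contra h
  push_neg at h
  have h2 : (2:ℝ) ^ 4 < Real.exp (1/4) ^ 4 := by
    apply pow_lt_pow_left₀ h (by norm_num) (by norm_num)
  rw [h1] at h2
  nlinarith [Real.exp_one_lt_d9]

lemma gauss_shift {t x z y : ℝ} (ht : 0 < t) (hshift : (z - x) ^ 2 ≤ t) :
    Real.exp (-(z - y) ^ 2 / (4 * t)) ≤ 2 * Real.exp (-(x - y) ^ 2 / (8 * t)) := by
  have key : (1/4 + -(x - y) ^ 2 / (8 * t)) - (-(z - y) ^ 2 / (4 * t))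
      = (2 * t + 2 * (z - y) ^ 2 - (x - y) ^ 2) / (8 * t) := by
    field_simp; ring
  have hnum : 0 ≤ 2 * t + 2 * (z - y) ^ 2 - (x - y) ^ 2 := by
    nlinarith [sq_nonneg ((z - y) + (z - x))]
  have hexp : -(z - y) ^ 2 / (4 * t) ≤ 1/4 + -(x - y) ^ 2 / (8 * t) := by
    have := div_nonneg hnum (by positivity : (0:ℝ) ≤ 8 * t)
    linarith [key ▸ this]
  calc Real.exp (-(z - y) ^ 2 / (4 * t))
      ≤ Real.exp (1/4 + -(x - y) ^ 2 / (8 * t)) := Real.exp_le_exp.mpr hexp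
    _ = Real.exp (1/4) * Real.exp (-(x - y) ^ 2 / (8 * t)) := Real.exp_add _ _
    _ ≤ 2 * Real.exp (-(x - y) ^ 2 / (8 * t)) :=
        mul_le_mul_of_nonneg_right exp_quarter_le_two (Real.exp_pos _).le

lemma gauss_integrable {t : ℝ} (ht : 0 < t) (m : ℝ) :
    Integrable (fun y => Real.exp (-(y - m) ^ 2 / (8 * t))) := by
  have he : (fun y : ℝ => Real.exp (-(y - m) ^ 2 / (8 * t)))
      = fun y => Real.exp (-(8 * t)⁻¹ * (y - m) ^ 2) := by
    funext y; congr 1; field_simp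
  rw [he]
  exact (integrable_exp_neg_mul_sq (by positivity)).comp_sub_right m

lemma gauss_integral_le {t : ℝ} (ht : 0 < t) (m : ℝ) :
    ∫ y in Set.Ioi (0:ℝ), Real.exp (-(y - m) ^ 2 / (8 * t)) ≤ 6 * Real.sqrt t := by
  have hint := gauss_integrable ht m
  have h1 : ∫ y in Set.Ioi (0:ℝ), Real.exp (-(y - m) ^ 2 / (8 * t))
      ≤ ∫ y : ℝ, Real.exp (-(y - m) ^ 2 / (8 * t)) :=
    setIntegral_le_integral hint (Filter.Eventually.of_forall fun y => (Real.exp_pos _).le)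
  have h2 : ∫ y : ℝ, Real.exp (-(y - m) ^ 2 / (8 * t)) = Real.sqrt (Real.pi * (8 * t)) := by
    have he : (fun y : ℝ => Real.exp (-(y - m) ^ 2 / (8 * t)))
        = fun y : ℝ => Real.exp (-(8 * t)⁻¹ * (y - m) ^ 2) := by
      funext y; congr 1; field_simp
    rw [he]
    rw [integral_sub_right_eq_self (μ := volume) (fun u : ℝ => Real.exp (-(8 * t)⁻¹ * u ^ 2)) m]
    rw [integral_gaussian]
    rw [div_inv_eq_mul]
  rw [h2] at h1
  refine h1.trans ?_
  have h36 : Real.pi * (8 * t) ≤ 36 * t := by nlinarith [Real.pi_le_four]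
  calc Real.sqrt (Real.pi * (8 * t)) ≤ Real.sqrt (36 * t) := Real.sqrt_le_sqrt h36
    _ = 6 * Real.sqrt t := by
        rw [show (36:ℝ) * t = 6 ^ 2 * t by norm_num, Real.sqrt_mul (by positivity),
          Real.sqrt_sq (by norm_num)]

lemma integral_dheatp_eq {t : ℝ} (ht : 0 < t) (x θ y : ℝ) (hθ : θ ≠ 0) :
    ∫ a in Set.Icc (0:ℝ) 1, dheatp t (x + a * θ) y =
      (heatp t (x + θ) y - heatp t x y) / θ := by
  have hF : ∀ a ∈ Set.uIcc (0:ℝ) 1, HasDerivAt (fun b => heatp t (x + b * θ) y)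
      (θ * dheatp t (x + a * θ) y) a := by
    intro a _
    have hl : HasDerivAt (fun b : ℝ => x + b * θ) θ a := by
      simpa using ((hasDerivAt_id a).mul_const θ).const_add x
    have := (heatp_hasDerivAt t ht.ne' y (x + a * θ)).comp a hl
    simpa [mul_comm, Function.comp_def] using this
  have hcont : Continuous fun a : ℝ => dheatp t (x + a * θ) y :=
    (dheatp_continuous t y).comp (by continuity)
  have hFTC := intervalIntegral.integral_eq_sub_of_hasDerivAt hF
    ((continuous_const.mul hcont).intervalIntegrable 0 1)
  rw [intervalIntegral.integral_const_mul] at hFTC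
  have hIcc : ∫ a in Set.Icc (0:ℝ) 1, dheatp t (x + a * θ) y
      = ∫ a in (0:ℝ)..1, dheatp t (x + a * θ) y := by
    rw [intervalIntegral.integral_of_le zero_le_one,
      MeasureTheory.integral_Icc_eq_integral_Ioc]
  rw [hIcc, eq_div_iff hθ, mul_comm, hFTC]
  norm_num

/-- flipped versions -/
lemma gauss_integrable' {t : ℝ} (ht : 0 < t) (m : ℝ) :
    Integrable (fun y => Real.exp (-(m - y) ^ 2 / (8 * t))) := by
  have he : (fun y : ℝ => Real.exp (-(m - y) ^ 2 / (8 * t)))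
      = fun y => Real.exp (-(y - m) ^ 2 / (8 * t)) := by funext y; congr 1; ring
  rw [he]; exact gauss_integrable ht m

lemma gauss_integral_le' {t : ℝ} (ht : 0 < t) (m : ℝ) :
    ∫ y in Set.Ioi (0:ℝ), Real.exp (-(m - y) ^ 2 / (8 * t)) ≤ 6 * Real.sqrt t := by
  have he : (fun y : ℝ => Real.exp (-(m - y) ^ 2 / (8 * t)))
      = fun y => Real.exp (-(y - m) ^ 2 / (8 * t)) := by funext y; congr 1; ring
  rw [he]; exact gauss_integral_le ht m

lemma gauss_integrable0 {t : ℝ} (ht : 0 < t) :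
    Integrable (fun y : ℝ => Real.exp (-y ^ 2 / (8 * t))) := by
  have he : (fun y : ℝ => Real.exp (-y ^ 2 / (8 * t)))
      = fun y => Real.exp (-(y - 0) ^ 2 / (8 * t)) := by funext y; congr 1; ring
  rw [he]; exact gauss_integrable ht 0

lemma gauss_integral_le0 {t : ℝ} (ht : 0 < t) :
    ∫ y in Set.Ioi (0:ℝ), Real.exp (-y ^ 2 / (8 * t)) ≤ 6 * Real.sqrt t := by
  have he : (fun y : ℝ => Real.exp (-y ^ 2 / (8 * t)))
      = fun y => Real.exp (-(y - 0) ^ 2 / (8 * t)) := by funext y; congr 1; ring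
  rw [he]; exact gauss_integral_le ht 0

theorem heatp_deriv_averaged_Lp_bound (h₂ : ℝ) (hh₂ : h₂ ∈ Set.Ioo (1/2 : ℝ) 1) :
    ∃ C > (0 : ℝ), ∀ t > (0 : ℝ), ∀ x : ℝ, 0 ≤ x → ∀ θ : ℝ,
      (∀ a ∈ Set.Icc (0 : ℝ) 1, 0 ≤ x + a * θ) →
      (∫ y in Set.Ioi (0 : ℝ),
          |∫ a in Set.Icc (0 : ℝ) 1, deriv (fun x' => heatp t x' y) (x + a * θ)| ^ (1 / h₂)) ^ h₂ ≤
        C * t ^ ((h₂ - 2) / 2) := by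
  obtain ⟨hh1, hh2⟩ := hh₂
  have hh0 : 0 < h₂ := by linarith
  have hq1 : 1 < 1 / h₂ := one_lt_one_div hh0 hh2
  have hq2 : 1 / h₂ ≤ 2 := by rw [div_le_iff₀ hh0]; linarith
  have hq0 : 0 < 1 / h₂ := by linarith
  refine ⟨216, by norm_num, ?_⟩
  intro t ht x hx θ hθa
  simp only [deriv_heatp t ht.ne']
  set q : ℝ := 1 / h₂ with hqdef
  -- notation for the three Gaussians
  set E₁ : ℝ → ℝ := fun y => Real.exp (-(x - y) ^ 2 / (8 * t)) with hE₁
  set E₂ : ℝ → ℝ := fun y => Real.exp (-(x + θ - y) ^ 2 / (8 * t)) with hE₂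
  set E₃ : ℝ → ℝ := fun y => Real.exp (-y ^ 2 / (8 * t)) with hE₃
  have hsqt : 0 < Real.sqrt t := Real.sqrt_pos.mpr ht
  have hst : Real.sqrt t * Real.sqrt t = t := Real.mul_self_sqrt ht.le
  -- step 1 : pointwise bound on the averaged derivative
  have key : ∀ y ∈ Set.Ioi (0:ℝ),
      |∫ a in Set.Icc (0:ℝ) 1, dheatp t (x + a * θ) y|
        ≤ 2 * t⁻¹ * (E₁ y + E₂ y + E₃ y) := by
    intro y hy
    have hy0 : 0 ≤ y := (le_of_lt hy)
    have hE₂pos : 0 < E₂ y := Real.exp_pos _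
    have hE₁pos : 0 < E₁ y := Real.exp_pos _
    have hE₃pos : 0 < E₃ y := Real.exp_pos _
    have hti : 0 < t⁻¹ := inv_pos.mpr ht
    by_cases hcase : θ ^ 2 ≤ t
    · -- small θ : uniform bound on the integrand
      have hbound : ∀ a ∈ Set.Icc (0:ℝ) 1,
          ‖dheatp t (x + a * θ) y‖ ≤ t⁻¹ * (2 * E₁ y + E₃ y) := by
        intro a ha
        obtain ⟨ha0, ha1⟩ := ha
        have hz : 0 ≤ x + a * θ := hθa a ⟨ha0, ha1⟩
        have h1 := dheatp_abs_le ht hz hy0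
        have hsh : (x + a * θ - x) ^ 2 ≤ t := by
          have : (x + a * θ - x) ^ 2 = a ^ 2 * θ ^ 2 := by ring
          rw [this]
          have ha2 : a ^ 2 ≤ 1 := by nlinarith
          nlinarith [mul_le_mul_of_nonneg_right ha2 (sq_nonneg θ)]
        have h2 := gauss_shift (y := y) ht hsh
        have h3 : Real.exp (-y ^ 2 / (4 * t)) ≤ E₃ y := by
          apply exp_neg_div_le (by positivity) (by positivity)
          nlinarith [sq_nonneg y]
        rw [Real.norm_eq_abs]
        calc |dheatp t (x + a * θ) y|
            ≤ t⁻¹ * (Real.exp (-(x + a * θ - y) ^ 2 / (4 * t)) + Real.exp (-y ^ 2 / (4 * t))) := h1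
          _ ≤ t⁻¹ * (2 * E₁ y + E₃ y) := by
              apply mul_le_mul_of_nonneg_left _ hti.le
              exact add_le_add h2 h3
      have h4 := MeasureTheory.norm_setIntegral_le_of_norm_le_const
        (μ := volume) (s := Set.Icc (0:ℝ) 1)
        (by simp [Real.volume_Icc] : volume (Set.Icc (0:ℝ) 1) < ⊤)
        hbound
      rw [Real.norm_eq_abs] at h4
      have hvol : volume.real (Set.Icc (0:ℝ) 1) = 1 := by
        simp [Real.volume_real_Icc]
      rw [hvol, mul_one] at h4
      refine h4.trans ?_
      nlinarith [mul_pos hti hE₂pos, mul_pos hti hE₃pos, mul_pos hti hE₁pos]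
    · -- large θ : fundamental theorem of calculus
      have hθ0 : θ ≠ 0 := by
        intro h; rw [h] at hcase; simp at hcase; linarith
      have hθt : Real.sqrt t ≤ |θ| := by
        rw [← Real.sqrt_sq_eq_abs]
        exact Real.sqrt_le_sqrt (by linarith [not_le.mp hcase])
      rw [integral_dheatp_eq ht x θ y hθ0]
      have hA := heatp_abs_le ht (by simpa using hθa 1 (by norm_num)) hy0 (z := x + θ)
      have hB := heatp_abs_le ht hx hy0 (z := x)
      have h1 : |heatp t (x + θ) y - heatp t x y|
          ≤ (Real.sqrt t)⁻¹ * (E₁ y + E₂ y + 2 * E₃ y) := by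
        refine (abs_sub _ _).trans ?_
        have := add_le_add hA hB
        refine this.trans (le_of_eq ?_)
        rw [hE₁, hE₂, hE₃]
        ring
      rw [abs_div]
      calc |heatp t (x + θ) y - heatp t x y| / |θ|
          ≤ ((Real.sqrt t)⁻¹ * (E₁ y + E₂ y + 2 * E₃ y)) / Real.sqrt t := by
            apply div_le_div₀ (by positivity) h1 hsqt hθt
        _ = t⁻¹ * (E₁ y + E₂ y + 2 * E₃ y) := by
            rw [div_eq_mul_inv, mul_comm ((Real.sqrt t)⁻¹) _, mul_assoc, ← mul_inv, hst,
              mul_comm]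
        _ ≤ 2 * t⁻¹ * (E₁ y + E₂ y + E₃ y) := by
            nlinarith [mul_pos hti hE₂pos, mul_pos hti hE₃pos, mul_pos hti hE₁pos]
  -- step 2 : q-th power bound
  have key2 : ∀ y ∈ Set.Ioi (0:ℝ),
      |∫ a in Set.Icc (0:ℝ) 1, dheatp t (x + a * θ) y| ^ q
        ≤ 12 * t ^ (-q) * (E₁ y + E₂ y + E₃ y) := by
    intro y hy
    have hS : 0 < E₁ y + E₂ y + E₃ y := by positivity
    have hS3 : E₁ y + E₂ y + E₃ y ≤ 3 := by
      have e1 : E₁ y ≤ 1 := Real.exp_le_one_iff.mpr (by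
        apply div_nonpos_of_nonpos_of_nonneg (neg_nonpos.mpr (sq_nonneg _)) (by positivity))
      have e2 : E₂ y ≤ 1 := Real.exp_le_one_iff.mpr (by
        apply div_nonpos_of_nonpos_of_nonneg (neg_nonpos.mpr (sq_nonneg _)) (by positivity))
      have e3 : E₃ y ≤ 1 := Real.exp_le_one_iff.mpr (by
        apply div_nonpos_of_nonpos_of_nonneg (neg_nonpos.mpr (sq_nonneg _)) (by positivity))
      linarith
    have h1 : |∫ a in Set.Icc (0:ℝ) 1, dheatp t (x + a * θ) y| ^ q
        ≤ (2 * t⁻¹ * (E₁ y + E₂ y + E₃ y)) ^ q :=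
      Real.rpow_le_rpow (abs_nonneg _) (key y hy) hq0.le
    refine h1.trans ?_
    have h2 : (2 * t⁻¹ * (E₁ y + E₂ y + E₃ y)) ^ q
        = (2:ℝ) ^ q * t ^ (-q) * (E₁ y + E₂ y + E₃ y) ^ q := by
      rw [Real.mul_rpow (by positivity) hS.le, Real.mul_rpow (by norm_num) (by positivity),
        Real.inv_rpow ht.le, ← Real.rpow_neg ht.le]
    rw [h2]
    have h2q : (2:ℝ) ^ q ≤ 4 := by
      calc (2:ℝ) ^ q ≤ (2:ℝ) ^ (2:ℝ) := Real.rpow_le_rpow_of_exponent_le one_le_two hq2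
        _ = 4 := by
            rw [show (2:ℝ) = ((2:ℕ):ℝ) by norm_num, Real.rpow_natCast]; norm_num
    have hSq : (E₁ y + E₂ y + E₃ y) ^ q ≤ 3 * (E₁ y + E₂ y + E₃ y) := by
      calc (E₁ y + E₂ y + E₃ y) ^ q
          = (E₁ y + E₂ y + E₃ y) ^ (q - 1) * (E₁ y + E₂ y + E₃ y) ^ (1:ℝ) := by
            rw [← Real.rpow_add hS]; ring_nf
        _ ≤ 3 * (E₁ y + E₂ y + E₃ y) := by
            rw [Real.rpow_one]
            apply mul_le_mul_of_nonneg_right _ hS.le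
            calc (E₁ y + E₂ y + E₃ y) ^ (q - 1) ≤ (3:ℝ) ^ (q - 1) :=
                Real.rpow_le_rpow hS.le hS3 (by linarith)
              _ ≤ (3:ℝ) ^ (1:ℝ) :=
                Real.rpow_le_rpow_of_exponent_le (by norm_num) (by linarith)
              _ = 3 := Real.rpow_one 3
    calc (2:ℝ) ^ q * t ^ (-q) * (E₁ y + E₂ y + E₃ y) ^ q
        ≤ 4 * t ^ (-q) * (3 * (E₁ y + E₂ y + E₃ y)) := by
          apply mul_le_mul (mul_le_mul_of_nonneg_right h2q (by positivity)) hSq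
            (by positivity) (by positivity)
      _ = 12 * t ^ (-q) * (E₁ y + E₂ y + E₃ y) := by ring
  -- step 3 : integrate
  have i1 : Integrable E₁ (volume.restrict (Set.Ioi (0:ℝ))) :=
    (gauss_integrable' ht x).integrableOn
  have i2 : Integrable E₂ (volume.restrict (Set.Ioi (0:ℝ))) :=
    (gauss_integrable' ht (x + θ)).integrableOn
  have i3 : Integrable E₃ (volume.restrict (Set.Ioi (0:ℝ))) :=
    (gauss_integrable0 ht).integrableOn
  have i12 : Integrable (fun y => E₁ y + E₂ y) (volume.restrict (Set.Ioi (0:ℝ))) := i1.add i2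
  have isum : Integrable (fun y => E₁ y + E₂ y + E₃ y) (volume.restrict (Set.Ioi (0:ℝ))) :=
    i12.add i3
  have hintE : Integrable (fun y => 12 * t ^ (-q) * (E₁ y + E₂ y + E₃ y))
      (volume.restrict (Set.Ioi (0:ℝ))) := isum.const_mul _
  have hIleq : (∫ y in Set.Ioi (0:ℝ), |∫ a in Set.Icc (0:ℝ) 1, dheatp t (x + a * θ) y| ^ q)
      ≤ ∫ y in Set.Ioi (0:ℝ), 12 * t ^ (-q) * (E₁ y + E₂ y + E₃ y) := by
    apply integral_mono_of_nonneg
    · filter_upwards with y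
      positivity
    · exact hintE
    · exact (ae_restrict_iff' measurableSet_Ioi).mpr (Filter.Eventually.of_forall key2)
  have hItot : (∫ y in Set.Ioi (0:ℝ), 12 * t ^ (-q) * (E₁ y + E₂ y + E₃ y))
      ≤ 216 * (t ^ (-q) * Real.sqrt t) := by
    rw [MeasureTheory.integral_const_mul]
    have hsum : (∫ y in Set.Ioi (0:ℝ), (E₁ y + E₂ y + E₃ y))
        = (∫ y in Set.Ioi (0:ℝ), E₁ y) + (∫ y in Set.Ioi (0:ℝ), E₂ y)
          + (∫ y in Set.Ioi (0:ℝ), E₃ y) := by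
      rw [MeasureTheory.integral_add i12 i3, MeasureTheory.integral_add i1 i2]
    have h1 := gauss_integral_le' ht x
    have h2 := gauss_integral_le' ht (x + θ)
    have h3 := gauss_integral_le0 ht
    have : (∫ y in Set.Ioi (0:ℝ), (E₁ y + E₂ y + E₃ y)) ≤ 18 * Real.sqrt t := by
      rw [hsum]; rw [hE₁, hE₂, hE₃]
      linarith
    calc 12 * t ^ (-q) * (∫ y in Set.Ioi (0:ℝ), (E₁ y + E₂ y + E₃ y))
        ≤ 12 * t ^ (-q) * (18 * Real.sqrt t) := by
          apply mul_le_mul_of_nonneg_left this (by positivity)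
      _ = 216 * (t ^ (-q) * Real.sqrt t) := by ring
  -- step 4 : final rpow computation
  have hI0 : 0 ≤ ∫ y in Set.Ioi (0:ℝ), |∫ a in Set.Icc (0:ℝ) 1, dheatp t (x + a * θ) y| ^ q :=
    integral_nonneg fun y => by positivity
  have hIle := hIleq.trans hItot
  calc (∫ y in Set.Ioi (0:ℝ), |∫ a in Set.Icc (0:ℝ) 1, dheatp t (x + a * θ) y| ^ q) ^ h₂
      ≤ (216 * (t ^ (-q) * Real.sqrt t)) ^ h₂ := Real.rpow_le_rpow hI0 hIle hh0.le
    _ = (216:ℝ) ^ h₂ * (t ^ (-q) * Real.sqrt t) ^ h₂ :=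
        Real.mul_rpow (by norm_num) (by positivity)
    _ ≤ 216 * t ^ ((h₂ - 2) / 2) := by
        have e1 : (t ^ (-q) * Real.sqrt t) ^ h₂ = t ^ ((h₂ - 2) / 2) := by
          rw [Real.sqrt_eq_rpow, ← Real.rpow_add ht, ← Real.rpow_mul ht.le]
          congr 1
          rw [hqdef]
          field_simp
          ring
        rw [e1]
        apply mul_le_mul_of_nonneg_right _ (by positivity)
        calc (216:ℝ) ^ h₂ ≤ (216:ℝ) ^ (1:ℝ) :=
            Real.rpow_le_rpow_of_exponent_le (by norm_num) hh2.le
          _ = 216 := Real.rpow_one _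
end

section
/- Let h ∈ (0,1) and r_h(s,t) = (1/2)(t^{2h} + s^{2h} − |t−s|^{2h}) on [0,∞)². Then r_h is a positive semidefinite kernel: for all n, points t₁,…,tₙ ≥ 0 and reals λ₁,…,λₙ, ∑ᵢ∑ⱼ λᵢλⱼ r_h(tᵢ,tⱼ) ≥ 0. -/
open Real MeasureTheory Set

lemma one_sub_cos_le_half_sq (y : ℝ) : 1 - Real.cos y ≤ y ^ 2 / 2 := by
  have h1 := Real.cos_two_mul (y / 2)
  have h2 := Real.sin_sq_add_cos_sq (y / 2)
  have h3 := Real.sin_sq_le_sq (x := y / 2)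
  have h4 : 2 * (y / 2) = y := by ring
  rw [h4] at h1
  nlinarith

lemma fBm_intg (α : ℝ) (hα : 0 < α) (hα2 : α < 2) (x : ℝ) :
    IntegrableOn (fun u : ℝ => (1 - Real.cos (x * u)) * u ^ (-1 - α)) (Set.Ioi 0) := by
  have hmeas : Measurable (fun u : ℝ => (1 - Real.cos (x * u)) * u ^ (-1 - α)) := by
    exact (measurable_const.sub (Real.measurable_cos.comp (measurable_id.const_mul x))).mul
      (measurable_id.pow_const _)
  have h01 : IntegrableOn (fun u : ℝ => (1 - Real.cos (x * u)) * u ^ (-1 - α)) (Set.Ioc 0 1) := by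
    have hbase : IntegrableOn (fun u : ℝ => u ^ (1 - α)) (Set.Ioc 0 1) := by
      have := (intervalIntegral.intervalIntegrable_rpow' (a := 0) (b := 1)
        (r := 1 - α) (by linarith))
      rw [intervalIntegrable_iff_integrableOn_Ioc_of_le (by norm_num)] at this
      exact this
    refine Integrable.mono (hbase.const_mul (x ^ 2 / 2)) hmeas.aestronglyMeasurable.restrict ?_
    filter_upwards [ae_restrict_mem measurableSet_Ioc] with u hu
    have hu0 : 0 < u := hu.1
    have hw : (0 : ℝ) ≤ u ^ (-1 - α) := Real.rpow_nonneg hu0.le _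
    have hcos : 0 ≤ 1 - Real.cos (x * u) := by nlinarith [Real.cos_le_one (x * u)]
    have hb : 1 - Real.cos (x * u) ≤ (x * u) ^ 2 / 2 := one_sub_cos_le_half_sq (x * u)
    have hid : u ^ 2 * u ^ (-1 - α) = u ^ (1 - α) := by
      rw [← Real.rpow_natCast u 2, ← Real.rpow_add hu0]
      ring_nf
    rw [Real.norm_eq_abs, Real.norm_eq_abs, abs_of_nonneg (mul_nonneg hcos hw),
      abs_of_nonneg (mul_nonneg (by positivity) (Real.rpow_nonneg hu0.le _))]
    calc (1 - Real.cos (x * u)) * u ^ (-1 - α) ≤ (x * u) ^ 2 / 2 * u ^ (-1 - α) := by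
          exact mul_le_mul_of_nonneg_right hb hw
      _ = x ^ 2 / 2 * (u ^ 2 * u ^ (-1 - α)) := by ring
      _ = x ^ 2 / 2 * u ^ (1 - α) := by rw [hid]
  have h1i : IntegrableOn (fun u : ℝ => (1 - Real.cos (x * u)) * u ^ (-1 - α)) (Set.Ioi 1) := by
    have hbase : IntegrableOn (fun u : ℝ => u ^ (-1 - α)) (Set.Ioi 1) :=
      integrableOn_Ioi_rpow_of_lt (by linarith) one_pos
    refine Integrable.mono (hbase.const_mul 2) hmeas.aestronglyMeasurable.restrict ?_
    filter_upwards [ae_restrict_mem measurableSet_Ioi] with u hu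
    have hu0 : (0 : ℝ) < u := lt_trans one_pos hu
    have hw : (0 : ℝ) ≤ u ^ (-1 - α) := Real.rpow_nonneg hu0.le _
    have hcos : 0 ≤ 1 - Real.cos (x * u) := by nlinarith [Real.cos_le_one (x * u)]
    have hb : 1 - Real.cos (x * u) ≤ 2 := by nlinarith [Real.neg_one_le_cos (x * u)]
    rw [Real.norm_eq_abs, Real.norm_eq_abs, abs_of_nonneg (mul_nonneg hcos hw),
      abs_of_nonneg (mul_nonneg (by norm_num) hw)]
    exact mul_le_mul_of_nonneg_right hb hw
  have hunion : Set.Ioc (0 : ℝ) 1 ∪ Set.Ioi 1 = Set.Ioi 0 :=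
    Set.Ioc_union_Ioi_eq_Ioi (by norm_num)
  rw [← hunion]
  exact h01.union h1i

lemma fBm_scaling (α : ℝ) (hα : 0 < α) (x : ℝ) (hx : 0 ≤ x) :
    (∫ u in Set.Ioi (0 : ℝ), (1 - Real.cos (x * u)) * u ^ (-1 - α))
      = x ^ α * ∫ u in Set.Ioi (0 : ℝ), (1 - Real.cos u) * u ^ (-1 - α) := by
  rcases eq_or_lt_of_le hx with h0 | hxpos
  · rw [← h0]
    simp [Real.zero_rpow hα.ne']
  · set G : ℝ → ℝ := fun v => (1 - Real.cos v) * v ^ (-1 - α) with hG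
    have hstep : ∀ u ∈ Set.Ioi (0 : ℝ),
        (1 - Real.cos (x * u)) * u ^ (-1 - α) = x ^ (1 + α) * G (x * u) := by
      intro u hu
      have hu0 : 0 < u := hu
      have hmul : (x * u) ^ (-1 - α) = x ^ (-1 - α) * u ^ (-1 - α) :=
        Real.mul_rpow hxpos.le hu0.le
      have hxx : x ^ (1 + α) * x ^ (-1 - α) = 1 := by
        rw [← Real.rpow_add hxpos]
        norm_num
      simp only [hG, hmul]
      calc (1 - Real.cos (x * u)) * u ^ (-1 - α)
          = (x ^ (1 + α) * x ^ (-1 - α)) * ((1 - Real.cos (x * u)) * u ^ (-1 - α)) := by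
            rw [hxx, one_mul]
        _ = x ^ (1 + α) * ((1 - Real.cos (x * u)) * (x ^ (-1 - α) * u ^ (-1 - α))) := by ring
    calc (∫ u in Set.Ioi (0 : ℝ), (1 - Real.cos (x * u)) * u ^ (-1 - α))
        = ∫ u in Set.Ioi (0 : ℝ), x ^ (1 + α) * G (x * u) :=
          setIntegral_congr_fun measurableSet_Ioi hstep
      _ = x ^ (1 + α) * ∫ u in Set.Ioi (0 : ℝ), G (x * u) := integral_const_mul _ _
      _ = x ^ (1 + α) * (x⁻¹ • ∫ v in Set.Ioi (x * 0), G v) := by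
          rw [MeasureTheory.integral_comp_mul_left_Ioi G 0 hxpos]
      _ = x ^ α * ∫ v in Set.Ioi (0 : ℝ), G v := by
          rw [mul_zero, smul_eq_mul, ← mul_assoc]
          congr 1
          rw [Real.rpow_add hxpos, Real.rpow_one]
          field_simp
      _ = x ^ α * ∫ u in Set.Ioi (0 : ℝ), (1 - Real.cos u) * u ^ (-1 - α) := rfl

lemma fBm_Ival (α : ℝ) (hα : 0 < α) (x : ℝ) :
    (∫ u in Set.Ioi (0 : ℝ), (1 - Real.cos (x * u)) * u ^ (-1 - α))
      = |x| ^ α * ∫ u in Set.Ioi (0 : ℝ), (1 - Real.cos u) * u ^ (-1 - α) := by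
  rcases le_or_gt 0 x with hx | hx
  · rw [abs_of_nonneg hx]
    exact fBm_scaling α hα x hx
  · rw [abs_of_neg hx]
    rw [← fBm_scaling α hα (-x) (by linarith)]
    apply integral_congr_ae
    filter_upwards with u
    rw [neg_mul, Real.cos_neg]

lemma fBm_cpos (α : ℝ) (hα : 0 < α) (hα2 : α < 2) :
    0 < ∫ u in Set.Ioi (0 : ℝ), (1 - Real.cos u) * u ^ (-1 - α) := by
  have hint : IntegrableOn (fun u : ℝ => (1 - Real.cos u) * u ^ (-1 - α)) (Set.Ioi 0) := by
    have := fBm_intg α hα hα2 1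
    simpa using this
  have hnn : 0 ≤ᵐ[volume.restrict (Set.Ioi (0:ℝ))]
      fun u : ℝ => (1 - Real.cos u) * u ^ (-1 - α) := by
    filter_upwards [ae_restrict_mem measurableSet_Ioi] with u hu
    exact mul_nonneg (by nlinarith [Real.cos_le_one u]) (Real.rpow_nonneg (le_of_lt hu) _)
  rw [setIntegral_pos_iff_support_of_nonneg_ae hnn hint]
  have hsub : Set.Ioo (π / 2) π ⊆
      (Function.support fun u : ℝ => (1 - Real.cos u) * u ^ (-1 - α)) ∩ Set.Ioi 0 := by
    intro u hu
    have hpi := Real.pi_pos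
    have hu0 : 0 < u := lt_trans (by linarith) hu.1
    constructor
    · have hcos : Real.cos u ≤ 0 :=
        Real.cos_nonpos_of_pi_div_two_le_of_le hu.1.le (by linarith [hu.2.le])
      have : 0 < (1 - Real.cos u) * u ^ (-1 - α) :=
        mul_pos (by linarith) (Real.rpow_pos_of_pos hu0 _)
      exact this.ne'
    · exact hu0
  refine lt_of_lt_of_le ?_ (measure_mono hsub)
  rw [Real.volume_Ioo]
  have hpi := Real.pi_pos
  exact ENNReal.ofReal_pos.mpr (by linarith)

lemma fBm_key (n : ℕ) (lam c s : Fin n → ℝ) :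
    ∑ i, ∑ j, lam i * lam j * ((1 - c j) + (1 - c i) - (1 - (c j * c i + s j * s i)))
      = (∑ i, lam i * (1 - c i)) ^ 2 + (∑ i, lam i * s i) ^ 2 := by
  rw [sq, sq, Finset.sum_mul_sum, Finset.sum_mul_sum, ← Finset.sum_add_distrib]
  refine Finset.sum_congr rfl fun i _ => ?_
  rw [← Finset.sum_add_distrib]
  exact Finset.sum_congr rfl fun j _ => by ring

theorem fBm_cov_posSemidef (h : ℝ) (hh : h ∈ Set.Ioo (0 : ℝ) 1) :
    ∀ (n : ℕ) (t : Fin n → ℝ) (lam : Fin n → ℝ), (∀ i, 0 ≤ t i) →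
      0 ≤ ∑ i, ∑ j, lam i * lam j *
        ((1 / 2) * ((t j) ^ (2 * h) + (t i) ^ (2 * h) - |t j - t i| ^ (2 * h))) := by
  intro n t lam ht
  obtain ⟨h0, h1⟩ := hh
  set α : ℝ := 2 * h with hαdef
  have hα : 0 < α := by simp [hαdef]; linarith
  have hα2 : α < 2 := by simp [hαdef]; linarith
  set c : ℝ := ∫ u in Set.Ioi (0 : ℝ), (1 - Real.cos u) * u ^ (-1 - α) with hc
  have hcpos : 0 < c := fBm_cpos α hα hα2
  -- integrand family
  set F : Fin n → Fin n → ℝ → ℝ := fun i j u =>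
    lam i * lam j * ((1 - Real.cos (t j * u)) * u ^ (-1 - α)
      + (1 - Real.cos (t i * u)) * u ^ (-1 - α)
      - (1 - Real.cos ((t j - t i) * u)) * u ^ (-1 - α)) with hF
  have hFint : ∀ i j, Integrable (F i j) (volume.restrict (Set.Ioi (0:ℝ))) := by
    intro i j
    exact ((((fBm_intg α hα hα2 (t j)).add (fBm_intg α hα hα2 (t i))).sub
      (fBm_intg α hα hα2 (t j - t i))).const_mul _)
  have hterm : ∀ i j, c * (t j ^ α + t i ^ α - |t j - t i| ^ α)
      = ∫ u in Set.Ioi (0 : ℝ), F i j u / (lam i * lam j) ∨ True := fun _ _ => Or.inr trivial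
  -- value of each single integral
  have hIt : ∀ i : Fin n, (∫ u in Set.Ioi (0 : ℝ), (1 - Real.cos (t i * u)) * u ^ (-1 - α))
      = t i ^ α * c := by
    intro i
    rw [fBm_Ival α hα (t i), abs_of_nonneg (ht i)]
  have hId : ∀ i j : Fin n,
      (∫ u in Set.Ioi (0 : ℝ), (1 - Real.cos ((t j - t i) * u)) * u ^ (-1 - α))
      = |t j - t i| ^ α * c := fun i j => fBm_Ival α hα (t j - t i)
  -- each term of the double sum times c equals the integral of F i j
  have hterm2 : ∀ i j : Fin n,
      c * (lam i * lam j * (t j ^ α + t i ^ α - |t j - t i| ^ α))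
        = ∫ u in Set.Ioi (0 : ℝ), F i j u := by
    intro i j
    have e1 : (∫ u in Set.Ioi (0 : ℝ), F i j u)
        = lam i * lam j * ((∫ u in Set.Ioi (0 : ℝ), (1 - Real.cos (t j * u)) * u ^ (-1 - α))
          + (∫ u in Set.Ioi (0 : ℝ), (1 - Real.cos (t i * u)) * u ^ (-1 - α))
          - ∫ u in Set.Ioi (0 : ℝ), (1 - Real.cos ((t j - t i) * u)) * u ^ (-1 - α)) := by
      have hadd : Integrable (fun u : ℝ => (1 - Real.cos (t j * u)) * u ^ (-1 - α)
          + (1 - Real.cos (t i * u)) * u ^ (-1 - α)) (volume.restrict (Set.Ioi 0)) :=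
        (fBm_intg α hα hα2 (t j)).add (fBm_intg α hα hα2 (t i))
      simp only [hF]
      rw [integral_const_mul, integral_sub hadd (fBm_intg α hα hα2 (t j - t i)),
        integral_add (fBm_intg α hα hα2 (t j)) (fBm_intg α hα hα2 (t i))]
    rw [e1, hIt, hIt, hId]
    ring
  -- sum of integrals equals integral of the nonnegative function
  have hsum : c * (∑ i, ∑ j, lam i * lam j * (t j ^ α + t i ^ α - |t j - t i| ^ α))
      = ∫ u in Set.Ioi (0 : ℝ),
          ((∑ i, lam i * (1 - Real.cos (t i * u))) ^ 2
            + (∑ i, lam i * Real.sin (t i * u)) ^ 2) * u ^ (-1 - α) := by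
    rw [Finset.mul_sum]
    have : ∀ i ∈ Finset.univ, c * (∑ j, lam i * lam j * (t j ^ α + t i ^ α - |t j - t i| ^ α))
        = ∑ j, ∫ u in Set.Ioi (0 : ℝ), F i j u := by
      intro i _
      rw [Finset.mul_sum]
      exact Finset.sum_congr rfl fun j _ => hterm2 i j
    rw [Finset.sum_congr rfl this]
    have hswap : ∀ i ∈ Finset.univ, (∑ j, ∫ u in Set.Ioi (0 : ℝ), F i j u)
        = ∫ u in Set.Ioi (0 : ℝ), ∑ j, F i j u := by
      intro i _
      exact (integral_finset_sum Finset.univ fun j _ => hFint i j).symm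
    rw [Finset.sum_congr rfl hswap,
      ← integral_finset_sum Finset.univ (fun i _ =>
        integrable_finset_sum Finset.univ (fun j _ => hFint i j))]
    apply integral_congr_ae
    filter_upwards with u
    have hptF : ∀ i j : Fin n, F i j u = (lam i * lam j *
        ((1 - Real.cos (t j * u)) + (1 - Real.cos (t i * u))
          - (1 - (Real.cos (t j * u) * Real.cos (t i * u)
            + Real.sin (t j * u) * Real.sin (t i * u))))) * u ^ (-1 - α) := by
      intro i j
      simp only [hF]
      rw [show (t j - t i) * u = t j * u - t i * u from by ring, Real.cos_sub]
      ring
    calc (∑ i, ∑ j, F i j u)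
        = (∑ i, ∑ j, lam i * lam j *
            ((1 - Real.cos (t j * u)) + (1 - Real.cos (t i * u))
              - (1 - (Real.cos (t j * u) * Real.cos (t i * u)
                + Real.sin (t j * u) * Real.sin (t i * u))))) * u ^ (-1 - α) := by
          rw [Finset.sum_mul]
          refine Finset.sum_congr rfl fun i _ => ?_
          rw [Finset.sum_mul]
          exact Finset.sum_congr rfl fun j _ => hptF i j
      _ = ((∑ i, lam i * (1 - Real.cos (t i * u))) ^ 2
            + (∑ i, lam i * Real.sin (t i * u)) ^ 2) * u ^ (-1 - α) := by
          exact congrArg (fun z => z * u ^ (-1 - α))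
            (fBm_key n lam (fun i => Real.cos (t i * u)) (fun i => Real.sin (t i * u)))
  have hintnn : 0 ≤ ∫ u in Set.Ioi (0 : ℝ),
      ((∑ i, lam i * (1 - Real.cos (t i * u))) ^ 2
        + (∑ i, lam i * Real.sin (t i * u)) ^ 2) * u ^ (-1 - α) := by
    refine setIntegral_nonneg measurableSet_Ioi fun u hu => ?_
    exact mul_nonneg (by positivity) (Real.rpow_nonneg (le_of_lt hu) _)
  have hS : 0 ≤ ∑ i, ∑ j, lam i * lam j * (t j ^ α + t i ^ α - |t j - t i| ^ α) := by
    have := hsum ▸ hintnn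
    nlinarith
  have hfinal : (∑ i, ∑ j, lam i * lam j *
        ((1 / 2) * ((t j) ^ (2 * h) + (t i) ^ (2 * h) - |t j - t i| ^ (2 * h))))
      = (1 / 2) * ∑ i, ∑ j, lam i * lam j * (t j ^ α + t i ^ α - |t j - t i| ^ α) := by
    rw [Finset.mul_sum]
    refine Finset.sum_congr rfl fun i _ => ?_
    rw [Finset.mul_sum]
    refine Finset.sum_congr rfl fun j _ => ?_
    rw [hαdef]
    ring
  rw [hfinal]
  linarith
end
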